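/- If H is a graph with o(H) = 𝒮 and G is a connected graph with n(G) ≥ 2, then γ_SMB(G⊙H) = γ_SMB'(G⊙H) = 1 + γ_SMB(H). -/

import Mathlib

/-!
Formalization of the Maker-Breaker domination game (MBD game).

In the MBD game on a graph `G`, Dominator and Staller alternately select
previously unplayed vertices.  Dominator wins when the set of vertices he has
selected is a dominating set of `G`; Staller wins when she has selected a
vertex of every dominating set of `G`, which happens exactly when the closed
neighbourhood of some vertex is entirely contained in her set of selected
vertices.
-/

/-- `D` is a dominating set of `G` (as a finset of vertices). -/
def IsDomSet {V : Type*} (G : SimpleGraph V) (D : Finset V) : Prop :=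
  ∀ v, v ∈ D ∨ ∃ u ∈ D, G.Adj u v

/-- Staller (whose selected vertices form `S`) has won: she owns the whole
closed neighbourhood of some vertex, hence a vertex of every dominating set. -/
def StallerWon {V : Type*} (G : SimpleGraph V) (S : Finset V) : Prop :=
  ∃ v, v ∈ S ∧ ∀ u, G.Adj v u → u ∈ S

section Game

variable {V : Type*} [DecidableEq V]

mutual
  /-- Position with Dominator's vertices `D`, Staller's vertices `S` and
  Dominator to move: Dominator can guarantee to complete a dominating set
  using at most `k` further moves of his own. -/
  inductive DomWinD (G : SimpleGraph V) : Finset V → Finset V → ℕ → Prop where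
    | done (D S : Finset V) (k : ℕ) : IsDomSet G D → DomWinD G D S k
    | step (D S : Finset V) (k : ℕ) (v : V) : v ∉ D → v ∉ S →
        DomWinS G (insert v D) S k → DomWinD G D S (k + 1)

  /-- Position with Dominator's vertices `D`, Staller's vertices `S` and
  Staller to move: Dominator can guarantee to complete a dominating set
  using at most `k` further moves of his own. -/
  inductive DomWinS (G : SimpleGraph V) : Finset V → Finset V → ℕ → Prop where
    | done (D S : Finset V) (k : ℕ) : IsDomSet G D → DomWinS G D S k
    | step (D S : Finset V) (k : ℕ) : (∃ w, w ∉ D ∧ w ∉ S) →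
        (∀ w, w ∉ D → w ∉ S → DomWinD G D (insert w S) k) → DomWinS G D S k
end

mutual
  /-- Position with Dominator's vertices `D`, Staller's vertices `S` and
  Staller to move: Staller can guarantee to claim a whole closed neighbourhood
  using at most `k` further moves of her own. -/
  inductive StalWinS (G : SimpleGraph V) : Finset V → Finset V → ℕ → Prop where
    | done (D S : Finset V) (k : ℕ) : StallerWon G S → StalWinS G D S k
    | step (D S : Finset V) (k : ℕ) (w : V) : w ∉ D → w ∉ S →
        StalWinD G D (insert w S) k → StalWinS G D S (k + 1)

  /-- Position with Dominator's vertices `D`, Staller's vertices `S` and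
  Dominator to move: Staller can guarantee to claim a whole closed
  neighbourhood using at most `k` further moves of her own. -/
  inductive StalWinD (G : SimpleGraph V) : Finset V → Finset V → ℕ → Prop where
    | done (D S : Finset V) (k : ℕ) : StallerWon G S → StalWinD G D S k
    | step (D S : Finset V) (k : ℕ) : (∃ v, v ∉ D ∧ v ∉ S) →
        (∀ v, v ∉ D → v ∉ S → StalWinS G (insert v D) S k) → StalWinD G D S k
end

/-- `γ_MB(G)`: minimum number of Dominator's moves with which he can guarantee
to win the D-game (Dominator moves first); `⊤` if he cannot win it. -/
noncomputable def gammaMB (G : SimpleGraph V) : ℕ∞ :=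
  sInf {k : ℕ∞ | ∃ n : ℕ, k = n ∧ DomWinD G ∅ ∅ n}

/-- `γ_MB'(G)`: minimum number of Dominator's moves with which he can guarantee
to win the S-game (Staller moves first); `⊤` if he cannot win it. -/
noncomputable def gammaMB' (G : SimpleGraph V) : ℕ∞ :=
  sInf {k : ℕ∞ | ∃ n : ℕ, k = n ∧ DomWinS G ∅ ∅ n}

/-- `γ_SMB(G)`: minimum number of Staller's moves with which she can guarantee
to win the D-game (Dominator moves first); `⊤` if she cannot win it. -/
noncomputable def gammaSMB (G : SimpleGraph V) : ℕ∞ :=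
  sInf {k : ℕ∞ | ∃ n : ℕ, k = n ∧ StalWinD G ∅ ∅ n}

/-- `γ_SMB'(G)`: minimum number of Staller's moves with which she can guarantee
to win the S-game (Staller moves first); `⊤` if she cannot win it. -/
noncomputable def gammaSMB' (G : SimpleGraph V) : ℕ∞ :=
  sInf {k : ℕ∞ | ∃ n : ℕ, k = n ∧ StalWinS G ∅ ∅ n}

/-- Outcome `𝒟`: Dominator has a winning strategy no matter who starts. -/
def OutcomeD (G : SimpleGraph V) : Prop :=
  (∃ n, DomWinD G ∅ ∅ n) ∧ (∃ n, DomWinS G ∅ ∅ n)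

/-- Outcome `𝒮`: Staller has a winning strategy no matter who starts. -/
def OutcomeS (G : SimpleGraph V) : Prop :=
  (∃ n, StalWinD G ∅ ∅ n) ∧ (∃ n, StalWinS G ∅ ∅ n)

/-- Outcome `𝒩`: the first player has a winning strategy. -/
def OutcomeN (G : SimpleGraph V) : Prop :=
  (∃ n, DomWinD G ∅ ∅ n) ∧ (∃ n, StalWinS G ∅ ∅ n)

end Game

/-- The corona product `G ⊙ H`: one copy of `G`, a copy of `H` for every
vertex of `G`, and the `i`-th vertex of `G` joined to every vertex of the
`i`-th copy of `H`. -/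
def coronaProd {α β : Type*} (G : SimpleGraph α) (H : SimpleGraph β) :
    SimpleGraph (α ⊕ α × β) where
  Adj x y :=
    match x, y with
    | Sum.inl a, Sum.inl a' => G.Adj a a'
    | Sum.inl a, Sum.inr p => a = p.1
    | Sum.inr p, Sum.inl a => a = p.1
    | Sum.inr p, Sum.inr q => p.1 = q.1 ∧ H.Adj p.2 q.2
  symm := by
    constructor
    rintro (a | p) (a' | q) h
    · exact G.adj_symm h
    · exact h
    · exact h
    · exact ⟨h.1.symm, H.adj_symm h.2⟩
  loopless := by
    constructor
    rintro (a | p) h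
    · exact G.irrefl h
    · exact H.irrefl h.2

/-- The domination number `γ(G)` of a finite graph. -/
noncomputable def domNumber {V : Type*} [Fintype V] (G : SimpleGraph V) : ℕ :=
  sInf {n : ℕ | ∃ D : Finset V, D.card = n ∧ IsDomSet G D}

/-- `v` is a dominating vertex: it is adjacent to all other vertices. -/
def IsDomVertex {V : Type*} (G : SimpleGraph V) (v : V) : Prop :=
  ∀ u, u ≠ v → G.Adj v u

/-- `v` is an isolated vertex (degree `0`). -/
def IsIsolatedVertex {V : Type*} (G : SimpleGraph V) (v : V) : Prop :=
  ∀ u, ¬ G.Adj v u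

/-- `v` is a leaf (degree `1`). -/
def IsLeaf {V : Type*} (G : SimpleGraph V) (v : V) : Prop :=
  ∃! u, G.Adj v u

/-- `v` is a strong support vertex: adjacent to at least two leaves. -/
def IsStrongSupport {V : Type*} (G : SimpleGraph V) (v : V) : Prop :=
  ∃ u w, u ≠ w ∧ G.Adj v u ∧ G.Adj v w ∧ IsLeaf G u ∧ IsLeaf G w

section Basic
variable {V : Type*} [DecidableEq V] {G : SimpleGraph V}

theorem stallerWon_mono {S S' : Finset V} (h : S ⊆ S') (hw : StallerWon G S) :
    StallerWon G S' := by
  obtain ⟨v, hv, hn⟩ := hw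
  exact ⟨v, h hv, fun u hu => h (hn u hu)⟩

theorem count_mono (G : SimpleGraph V) :
    ∀ n : ℕ, (∀ D S : Finset V, StalWinS G D S n → StalWinS G D S (n+1)) ∧
      (∀ D S : Finset V, StalWinD G D S n → StalWinD G D S (n+1)) := by
  intro n
  induction n with
  | zero =>
    have sp : ∀ D S : Finset V, StalWinS G D S 0 → StalWinS G D S 1 := by
      intro D S h
      cases h with
      | done _ _ _ hw => exact .done _ _ _ hw
    refine ⟨sp, ?_⟩
    intro D S h
    cases h with
    | done _ _ _ hw => exact .done _ _ _ hw
    | step _ _ _ hex hresp =>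
      exact .step _ _ _ hex (fun v h1 h2 => sp _ _ (hresp v h1 h2))
  | succ n ih =>
    have sp : ∀ D S : Finset V, StalWinS G D S (n+1) → StalWinS G D S (n+2) := by
      intro D S h
      cases h with
      | done _ _ _ hw => exact .done _ _ _ hw
      | step _ _ _ w hw1 hw2 child =>
        exact .step _ _ _ w hw1 hw2 (ih.2 _ _ child)
    refine ⟨sp, ?_⟩
    intro D S h
    cases h with
    | done _ _ _ hw => exact .done _ _ _ hw
    | step _ _ _ hex hresp =>
      exact .step _ _ _ hex (fun v h1 h2 => sp _ _ (hresp v h1 h2))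

theorem count_le {G : SimpleGraph V} {n n' : ℕ} (h : n ≤ n') :
    (∀ D S : Finset V, StalWinS G D S n → StalWinS G D S n') ∧
      (∀ D S : Finset V, StalWinD G D S n → StalWinD G D S n') := by
  induction h with
  | refl => exact ⟨fun _ _ h => h, fun _ _ h => h⟩
  | step _ ih =>
    exact ⟨fun D S h => (count_mono G _).1 _ _ (ih.1 D S h),
      fun D S h => (count_mono G _).2 _ _ (ih.2 D S h)⟩

theorem d_mono (G : SimpleGraph V) :
    ∀ n : ℕ, (∀ D D' S : Finset V, D' ⊆ D → StalWinS G D S n → StalWinS G D' S n) ∧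
      (∀ D D' S : Finset V, D' ⊆ D → StalWinD G D S n → StalWinD G D' S n) := by
  intro n
  induction n with
  | zero =>
    have sp : ∀ D D' S : Finset V, D' ⊆ D → StalWinS G D S 0 → StalWinS G D' S 0 := by
      intro D D' S hsub h
      cases h with
      | done _ _ _ hw => exact .done _ _ _ hw
    refine ⟨sp, ?_⟩
    intro D D' S hsub h
    cases h with
    | done _ _ _ hw => exact .done _ _ _ hw
    | step _ _ _ hex hresp =>
      obtain ⟨v0, h01, h02⟩ := hex
      refine .step _ _ _ ⟨v0, fun hc => h01 (hsub hc), h02⟩ ?_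
      intro v hv1 hv2
      by_cases hvD : v ∈ D
      · refine sp _ _ _ ?_ (hresp v0 h01 h02)
        exact Finset.insert_subset (Finset.mem_insert_of_mem hvD)
          ((hsub.trans (Finset.subset_insert _ _)))
      · exact sp _ _ _ (Finset.insert_subset_insert _ hsub) (hresp v hvD hv2)
  | succ n ih =>
    have sp : ∀ D D' S : Finset V, D' ⊆ D → StalWinS G D S (n+1) → StalWinS G D' S (n+1) := by
      intro D D' S hsub h
      cases h with
      | done _ _ _ hw => exact .done _ _ _ hw
      | step _ _ _ w hw1 hw2 child =>
        exact .step _ _ _ w (fun hc => hw1 (hsub hc)) hw2 (ih.2 _ _ _ hsub child)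
    refine ⟨sp, ?_⟩
    intro D D' S hsub h
    cases h with
    | done _ _ _ hw => exact .done _ _ _ hw
    | step _ _ _ hex hresp =>
      obtain ⟨v0, h01, h02⟩ := hex
      refine .step _ _ _ ⟨v0, fun hc => h01 (hsub hc), h02⟩ ?_
      intro v hv1 hv2
      by_cases hvD : v ∈ D
      · refine sp _ _ _ ?_ (hresp v0 h01 h02)
        exact Finset.insert_subset (Finset.mem_insert_of_mem hvD)
          ((hsub.trans (Finset.subset_insert _ _)))
      · exact sp _ _ _ (Finset.insert_subset_insert _ hsub) (hresp v hvD hv2)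

theorem tempo {D S : Finset V} {n : ℕ} (h : StalWinD G D S n) : StalWinS G D S n := by
  cases h with
  | done _ _ _ hw => exact .done _ _ _ hw
  | step _ _ _ hex hresp =>
    obtain ⟨v0, h1, h2⟩ := hex
    cases hresp v0 h1 h2 with
    | done _ _ _ hw => exact .done _ _ _ hw
    | step _ _ k w hw1 hw2 child =>
      exact .step _ _ _ w (fun hc => hw1 (Finset.mem_insert_of_mem hc)) hw2
        ((d_mono G k).2 _ _ _ (Finset.subset_insert _ _) child)

theorem win_zero {D S : Finset V} (h : StalWinD G D S 0) : StallerWon G S := by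
  cases h with
  | done _ _ _ hw => exact hw
  | step _ _ _ hex hresp =>
    obtain ⟨v0, h1, h2⟩ := hex
    cases hresp v0 h1 h2 with
    | done _ _ _ hw => exact hw

theorem negstep {D S : Finset V} {n : ℕ} (h : ¬ StalWinD G D S n)
    (hex : ∃ v, v ∉ D ∧ v ∉ S) :
    ∃ v, v ∉ D ∧ v ∉ S ∧ ¬ StalWinS G (insert v D) S n := by
  by_contra hc
  push_neg at hc
  exact h (.step _ _ _ hex (fun v h1 h2 => hc v h1 h2))

end Basic
section Corona
variable {α β : Type*} [Fintype α] [DecidableEq α] [Fintype β] [DecidableEq β]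
variable {G : SimpleGraph α} {H : SimpleGraph β}

/-- projection of a corona position to the copy of `H` at `a` -/
def pj (a : α) (D : Finset (α ⊕ α × β)) : Finset β :=
  Finset.univ.filter (fun b => Sum.inr (a, b) ∈ D)

lemma mem_pj {a : α} {D : Finset (α ⊕ α × β)} {b : β} :
    b ∈ pj a D ↔ Sum.inr (a, b) ∈ D := by simp [pj]

lemma pj_subset_insert (a : α) (v : α ⊕ α × β) (D : Finset (α ⊕ α × β)) :
    pj a D ⊆ pj a (insert v D) := by
  intro b hb
  exact mem_pj.2 (Finset.mem_insert_of_mem (mem_pj.1 hb))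

lemma pj_insert_inr (a : α) (b : β) (D : Finset (α ⊕ α × β)) :
    pj a (insert (Sum.inr (a, b)) D) = insert b (pj a D) := by
  ext c
  simp [mem_pj, Finset.mem_insert]

lemma pj_insert_ne {a : α} {v : α ⊕ α × β} (hv : ∀ b : β, v ≠ Sum.inr (a, b))
    (D : Finset (α ⊕ α × β)) : pj a (insert v D) = pj a D := by
  ext c
  simp only [mem_pj, Finset.mem_insert]
  constructor
  · rintro (h | h)
    · exact absurd h.symm (hv c)
    · exact h
  · exact Or.inr

lemma won_transfer {a : α} {SH : Finset β} {S : Finset (α ⊕ α × β)}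
    (hS : Sum.inl a ∈ S) (hiff : ∀ b, Sum.inr (a, b) ∈ S ↔ b ∈ SH)
    (hw : StallerWon H SH) : StallerWon (coronaProd G H) S := by
  obtain ⟨b, hb, hn⟩ := hw
  refine ⟨Sum.inr (a, b), (hiff b).2 hb, ?_⟩
  rintro (a' | ⟨a', b'⟩) hu
  · have : a' = a := hu
    rw [this]; exact hS
  · obtain ⟨h1, h2⟩ := hu
    have : a = a' := h1
    subst this
    exact (hiff b').2 (hn b' h2)

/-- Upper bound simulation: Staller embeds her `H`-strategy in copy `a`. -/
lemma upper_sim (G : SimpleGraph α) (H : SimpleGraph β) (a : α) :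
    ∀ n : ℕ,
      (∀ (DH SH : Finset β) (D S : Finset (α ⊕ α × β)),
        Sum.inl a ∈ S → (∀ b, Sum.inr (a, b) ∈ S ↔ b ∈ SH) →
        (∀ b, Sum.inr (a, b) ∈ D → b ∈ DH) →
        StalWinS H DH SH n → StalWinS (coronaProd G H) D S n) ∧
      (∀ (DH SH : Finset β) (D S : Finset (α ⊕ α × β)),
        Sum.inl a ∈ S → (∀ b, Sum.inr (a, b) ∈ S ↔ b ∈ SH) →
        (∀ b, Sum.inr (a, b) ∈ D → b ∈ DH) →
        StalWinD H DH SH n → StalWinD (coronaProd G H) D S n) := by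
  intro n
  induction n with
  | zero =>
    have sp : ∀ (DH SH : Finset β) (D S : Finset (α ⊕ α × β)),
        Sum.inl a ∈ S → (∀ b, Sum.inr (a, b) ∈ S ↔ b ∈ SH) →
        (∀ b, Sum.inr (a, b) ∈ D → b ∈ DH) →
        StalWinS H DH SH 0 → StalWinS (coronaProd G H) D S 0 := by
      intro DH SH D S h1 h2 h3 h
      cases h with
      | done _ _ _ hw => exact .done _ _ _ (won_transfer h1 h2 hw)
    refine ⟨sp, ?_⟩
    intro DH SH D S h1 h2 h3 h
    cases h with
    | done _ _ _ hw => exact .done _ _ _ (won_transfer h1 h2 hw)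
    | step _ _ _ hex hresp =>
      obtain ⟨vH, hv1, hv2⟩ := hex
      refine .step _ _ _ ⟨Sum.inr (a, vH), fun hc => hv1 (h3 _ hc),
        fun hc => hv2 ((h2 vH).1 hc)⟩ ?_
      intro v hvD hvS
      by_cases hcase : ∃ b : β, v = Sum.inr (a, b) ∧ b ∉ DH
      · obtain ⟨b, rfl, hbDH⟩ := hcase
        refine sp (insert b DH) SH (insert (Sum.inr (a, b)) D) S h1 h2 ?_
          (hresp b hbDH (fun hc => hvS ((h2 b).2 hc)))
        intro c hc
        rcases Finset.mem_insert.1 hc with hc | hc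
        · have hcb : c = b := by simpa using hc
          subst hcb
          exact Finset.mem_insert_self _ _
        · exact Finset.mem_insert_of_mem (h3 _ hc)
      · refine sp (insert vH DH) SH (insert v D) S h1 h2 ?_ (hresp vH hv1 hv2)
        intro c hc
        rcases Finset.mem_insert.1 hc with hc | hc
        · push_neg at hcase
          exact Finset.mem_insert_of_mem (hcase c hc.symm)
        · exact Finset.mem_insert_of_mem (h3 _ hc)
  | succ n ih =>
    have sp : ∀ (DH SH : Finset β) (D S : Finset (α ⊕ α × β)),
        Sum.inl a ∈ S → (∀ b, Sum.inr (a, b) ∈ S ↔ b ∈ SH) →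
        (∀ b, Sum.inr (a, b) ∈ D → b ∈ DH) →
        StalWinS H DH SH (n+1) → StalWinS (coronaProd G H) D S (n+1) := by
      intro DH SH D S h1 h2 h3 h
      cases h with
      | done _ _ _ hw => exact .done _ _ _ (won_transfer h1 h2 hw)
      | step _ _ _ wH hw1 hw2 child =>
        refine .step _ _ _ (Sum.inr (a, wH)) (fun hc => hw1 (h3 _ hc))
          (fun hc => hw2 ((h2 wH).1 hc)) ?_
        refine ih.2 DH (insert wH SH) D (insert (Sum.inr (a, wH)) S)
          (Finset.mem_insert_of_mem h1) ?_ h3 child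
        intro b
        simp [Finset.mem_insert, h2 b]
    refine ⟨sp, ?_⟩
    intro DH SH D S h1 h2 h3 h
    cases h with
    | done _ _ _ hw => exact .done _ _ _ (won_transfer h1 h2 hw)
    | step _ _ _ hex hresp =>
      obtain ⟨vH, hv1, hv2⟩ := hex
      refine .step _ _ _ ⟨Sum.inr (a, vH), fun hc => hv1 (h3 _ hc),
        fun hc => hv2 ((h2 vH).1 hc)⟩ ?_
      intro v hvD hvS
      by_cases hcase : ∃ b : β, v = Sum.inr (a, b) ∧ b ∉ DH
      · obtain ⟨b, rfl, hbDH⟩ := hcase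
        refine sp (insert b DH) SH (insert (Sum.inr (a, b)) D) S h1 h2 ?_
          (hresp b hbDH (fun hc => hvS ((h2 b).2 hc)))
        intro c hc
        rcases Finset.mem_insert.1 hc with hc | hc
        · have hcb : c = b := by simpa using hc
          subst hcb
          exact Finset.mem_insert_self _ _
        · exact Finset.mem_insert_of_mem (h3 _ hc)
      · refine sp (insert vH DH) SH (insert v D) S h1 h2 ?_ (hresp vH hv1 hv2)
        intro c hc
        rcases Finset.mem_insert.1 hc with hc | hc
        · push_neg at hcase
          exact Finset.mem_insert_of_mem (hcase c hc.symm)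
        · exact Finset.mem_insert_of_mem (h3 _ hc)

end Corona
section Lower
variable {α β : Type*} [Fintype α] [DecidableEq α] [Fintype β] [DecidableEq β]
variable {G : SimpleGraph α} {H : SimpleGraph β}

/-- copy `a` is safe for Dominator (stable position, Staller to move). -/
def OkS (H : SimpleGraph β) (K : ℕ) (D S : Finset (α ⊕ α × β)) (a : α) : Prop :=
  Sum.inl a ∈ D ∨
  (Sum.inl a ∈ S ∧ ¬ StalWinS H (pj a D) (pj a S) K) ∨
  (Sum.inl a ∉ D ∧ Sum.inl a ∉ S ∧ pj a S = ∅)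

/-- designated copy, Dominator to move there next. -/
def OkD (H : SimpleGraph β) (K : ℕ) (D S : Finset (α ⊕ α × β)) (a : α) : Prop :=
  Sum.inl a ∈ D ∨
  (Sum.inl a ∈ S ∧ ¬ StalWinD H (pj a D) (pj a S) K) ∨
  (Sum.inl a ∉ D ∧ Sum.inl a ∉ S)

lemma okS_insertD {K : ℕ} {D S : Finset (α ⊕ α × β)} {a : α} (v : α ⊕ α × β)
    (h : OkS H K D S a) : OkS H K (insert v D) S a := by
  rcases h with h | ⟨h1, h2⟩ | ⟨h1, h2, h3⟩
  · exact Or.inl (Finset.mem_insert_of_mem h)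
  · exact Or.inr (Or.inl ⟨h1, fun hw =>
      h2 ((d_mono H K).1 _ _ _ (pj_subset_insert a v D) hw)⟩)
  · by_cases hv : v = Sum.inl a
    · exact Or.inl (hv ▸ Finset.mem_insert_self _ _)
    · exact Or.inr (Or.inr ⟨by
        simp only [Finset.mem_insert]
        rintro (rfl | hc)
        · exact hv rfl
        · exact h1 hc, h2, h3⟩)

lemma okS_mono_count {K : ℕ} {D S : Finset (α ⊕ α × β)} {a : α}
    (h : OkS H (K+1) D S a) : OkS H K D S a := by
  rcases h with h | ⟨h1, h2⟩ | h
  · exact Or.inl h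
  · exact Or.inr (Or.inl ⟨h1, fun hw => h2 ((count_mono H K).1 _ _ hw)⟩)
  · exact Or.inr (Or.inr h)

lemma okS_insertS_inl {K : ℕ} {D S : Finset (α ⊕ α × β)} {a a₀ : α} (hne : a ≠ a₀)
    (h : OkS H K D S a) : OkS H K D (insert (Sum.inl a₀) S) a := by
  have hpj : pj a (insert (Sum.inl a₀) S) = pj a S :=
    pj_insert_ne (fun b h => by simp at h) S
  rcases h with h | ⟨h1, h2⟩ | ⟨h1, h2, h3⟩
  · exact Or.inl h
  · exact Or.inr (Or.inl ⟨Finset.mem_insert_of_mem h1, by rw [hpj]; exact h2⟩)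
  · refine Or.inr (Or.inr ⟨h1, ?_, by rw [hpj]; exact h3⟩)
    simp only [Finset.mem_insert]
    rintro (hc | hc)
    · exact hne (by simpa using hc)
    · exact h2 hc

lemma okS_insertS_inr {K : ℕ} {D S : Finset (α ⊕ α × β)} {a a₀ : α} {w0 : β}
    (hne : a ≠ a₀) (h : OkS H K D S a) :
    OkS H K D (insert (Sum.inr (a₀, w0)) S) a := by
  have hpj : pj a (insert (Sum.inr (a₀, w0)) S) = pj a S :=
    pj_insert_ne (fun b hb => by
      simp only [Sum.inr.injEq, Prod.mk.injEq] at hb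
      exact hne hb.1.symm) S
  rcases h with h | ⟨h1, h2⟩ | ⟨h1, h2, h3⟩
  · exact Or.inl h
  · exact Or.inr (Or.inl ⟨Finset.mem_insert_of_mem h1, by rw [hpj]; exact h2⟩)
  · refine Or.inr (Or.inr ⟨h1, ?_, by rw [hpj]; exact h3⟩)
    simp only [Finset.mem_insert]
    rintro (hc | hc)
    · simp at hc
    · exact h2 hc

lemma done_contra [Nonempty β] {S : Finset (α ⊕ α × β)}
    (hok : ∀ a : α, Sum.inl a ∈ S → ¬ StallerWon H (pj a S))
    (hw : StallerWon (coronaProd G H) S) : False := by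
  obtain ⟨x, hx, hnx⟩ := hw
  match x with
  | Sum.inl a =>
    refine hok a hx ?_
    have hall : ∀ b : β, b ∈ pj a S := by
      intro b
      exact mem_pj.2 (hnx (Sum.inr (a, b)) rfl)
    obtain ⟨b0⟩ := ‹Nonempty β›
    exact ⟨b0, hall b0, fun u _ => hall u⟩
  | Sum.inr (a, b) =>
    have hSa : Sum.inl a ∈ S := hnx (Sum.inl a) rfl
    refine hok a hSa ⟨b, mem_pj.2 hx, ?_⟩
    intro u hu
    exact mem_pj.2 (hnx (Sum.inr (a, u)) ⟨rfl, hu⟩)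
lemma disj_insertD {D S : Finset (α ⊕ α × β)} {v0 : α ⊕ α × β}
    (hdisj : ∀ v ∈ D, v ∉ S) (hv : v0 ∉ S) : ∀ v ∈ insert v0 D, v ∉ S := by
  intro v hvv
  rcases Finset.mem_insert.1 hvv with rfl | hvv
  · exact hv
  · exact hdisj v hvv

lemma disj_insertS {D S : Finset (α ⊕ α × β)} {w : α ⊕ α × β}
    (hdisj : ∀ v ∈ D, v ∉ S) (hw : w ∉ D) : ∀ v ∈ D, v ∉ insert w S := by
  intro v hv
  simp only [Finset.mem_insert]
  rintro (rfl | hc)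
  · exact hw hv
  · exact hdisj v hv hc

lemma LBDof (G : SimpleGraph α) (H : SimpleGraph β) [Nonempty β] (K : ℕ)
    (hLBS : ∀ D S : Finset (α ⊕ α × β), (∀ v ∈ D, v ∉ S) →
      (∀ a, OkS H K D S a) → ¬ StalWinS (coronaProd G H) D S K) :
    ∀ (D S : Finset (α ⊕ α × β)) (a₀ : α), (∀ v ∈ D, v ∉ S) →
      (∀ a, a ≠ a₀ → OkS H K D S a) → OkD H K D S a₀ →
      ¬ StalWinD (coronaProd G H) D S K := by
  intro D S a₀ hdisj hok hok0 h
  cases h with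
  | done _ _ _ hw =>
    refine done_contra (H := H) ?_ hw
    intro a haS
    by_cases ha : a = a₀
    · subst ha
      rcases hok0 with h | ⟨_, hres⟩ | ⟨_, h2⟩
      · exact absurd haS (hdisj _ h)
      · exact fun hw' => hres (.done _ _ _ hw')
      · exact absurd haS h2
    · rcases hok a ha with h | ⟨_, hres⟩ | ⟨_, h2, _⟩
      · exact absurd haS (hdisj _ h)
      · exact fun hw' => hres (.done _ _ _ hw')
      · exact absurd haS h2
  | step _ _ _ hex hresp =>
    rcases hok0 with hdead | ⟨hhub, hres⟩ | ⟨hf1, hf2⟩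
    · -- designated copy dead: arbitrary reply
      obtain ⟨v0, hv1, hv2⟩ := hex
      refine hLBS (insert v0 D) S (disj_insertD hdisj hv2) ?_ (hresp v0 hv1 hv2)
      intro a
      by_cases ha : a = a₀
      · subst ha; exact okS_insertD v0 (Or.inl hdead)
      · exact okS_insertD v0 (hok a ha)
    · -- designated copy is a hub copy
      by_cases hfull : ∃ b : β, b ∉ pj a₀ D ∧ b ∉ pj a₀ S
      · obtain ⟨vb, hb1, hb2, hres'⟩ := negstep hres hfull
        have hvD : Sum.inr (a₀, vb) ∉ D := fun hc => hb1 (mem_pj.2 hc)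
        have hvS : Sum.inr (a₀, vb) ∉ S := fun hc => hb2 (mem_pj.2 hc)
        refine hLBS (insert (Sum.inr (a₀, vb)) D) S (disj_insertD hdisj hvS) ?_
          (hresp _ hvD hvS)
        intro a
        by_cases ha : a = a₀
        · subst ha
          refine Or.inr (Or.inl ⟨hhub, ?_⟩)
          rw [pj_insert_inr]
          exact hres'
        · exact okS_insertD _ (hok a ha)
      · push_neg at hfull
        have hres2 : ¬ StalWinS H (pj a₀ D) (pj a₀ S) K := by
          intro hs
          cases hs with
          | done _ _ _ hw => exact hres (.done _ _ _ hw)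
          | step _ _ _ w hw1 hw2 _ => exact hw2 (hfull w hw1)
        obtain ⟨v0, hv1, hv2⟩ := hex
        refine hLBS (insert v0 D) S (disj_insertD hdisj hv2) ?_ (hresp v0 hv1 hv2)
        intro a
        by_cases ha : a = a₀
        · subst ha; exact okS_insertD v0 (Or.inr (Or.inl ⟨hhub, hres2⟩))
        · exact okS_insertD v0 (hok a ha)
    · -- designated copy fresh: Dominator kills it
      refine hLBS (insert (Sum.inl a₀) D) S (disj_insertD hdisj hf2) ?_
        (hresp _ hf1 hf2)
      intro a
      by_cases ha : a = a₀
      · subst ha; exact Or.inl (Finset.mem_insert_self _ _)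
      · exact okS_insertD _ (hok a ha)

lemma LBS (G : SimpleGraph α) (H : SimpleGraph β) [Nonempty β] (m : ℕ)
    (hmin : ∀ j, j < m → ¬ StalWinD H ∅ ∅ j) :
    ∀ K : ℕ, K ≤ m → ∀ D S : Finset (α ⊕ α × β), (∀ v ∈ D, v ∉ S) →
      (∀ a, OkS H K D S a) → ¬ StalWinS (coronaProd G H) D S K := by
  intro K
  induction K with
  | zero =>
    intro _ D S hdisj hok h
    cases h with
    | done _ _ _ hw =>
      refine done_contra (H := H) ?_ hw
      intro a haS
      rcases hok a with h | ⟨_, hres⟩ | ⟨_, h2, _⟩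
      · exact absurd haS (hdisj _ h)
      · exact fun hw' => hres (.done _ _ _ hw')
      · exact absurd haS h2
  | succ k ih =>
    intro hKm D S hdisj hok h
    have hkm : k ≤ m := Nat.le_of_succ_le hKm
    cases h with
    | done _ _ _ hw =>
      refine done_contra (H := H) ?_ hw
      intro a haS
      rcases hok a with h | ⟨_, hres⟩ | ⟨_, h2, _⟩
      · exact absurd haS (hdisj _ h)
      · exact fun hw' => hres (.done _ _ _ hw')
      · exact absurd haS h2
    | step _ _ _ w hw1 hw2 child =>
      match w with
      | Sum.inl a₀ =>
        refine LBDof G H k (fun D' S' hd ho => ih hkm D' S' hd ho)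
          D (insert (Sum.inl a₀) S) a₀ (disj_insertS hdisj hw1) ?_ ?_ child
        · intro a ha
          exact okS_insertS_inl ha (okS_mono_count (hok a))
        · -- a₀ becomes a hub copy
          have hfresh : Sum.inl a₀ ∉ D ∧ Sum.inl a₀ ∉ S ∧ pj a₀ S = ∅ := by
            rcases hok a₀ with h | ⟨h1, _⟩ | h
            · exact absurd h hw1
            · exact absurd h1 hw2
            · exact h
          have hpj : pj a₀ (insert (Sum.inl a₀) S) = pj a₀ S :=
            pj_insert_ne (fun b hb => by simp at hb) S
          refine Or.inr (Or.inl ⟨Finset.mem_insert_self _ _, ?_⟩)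
          rw [hpj, hfresh.2.2]
          intro hwin
          exact hmin k (Nat.lt_of_succ_le hKm)
            ((d_mono H k).2 _ ∅ _ (Finset.empty_subset _) hwin)
      | Sum.inr (a₀, w0) =>
        refine LBDof G H k (fun D' S' hd ho => ih hkm D' S' hd ho)
          D (insert (Sum.inr (a₀, w0)) S) a₀ (disj_insertS hdisj hw1) ?_ ?_ child
        · intro a ha
          exact okS_insertS_inr ha (okS_mono_count (hok a))
        · rcases hok a₀ with h | ⟨h1, h2⟩ | ⟨h1, h2, _⟩
          · exact Or.inl h
          · refine Or.inr (Or.inl ⟨Finset.mem_insert_of_mem h1, ?_⟩)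
            rw [pj_insert_inr]
            intro hwin
            refine h2 (.step _ _ _ w0 ?_ ?_ hwin)
            · exact fun hc => hw1 (mem_pj.1 hc)
            · exact fun hc => hw2 (mem_pj.1 hc)
          · refine Or.inr (Or.inr ⟨h1, ?_⟩)
            simp only [Finset.mem_insert]
            rintro (hc | hc)
            · simp at hc
            · exact h2 hc
end Lower

/-- If `o(H) = 𝒮` and `G` is connected with `n(G) ≥ 2`, then
`γ_SMB(G ⊙ H) = γ_SMB'(G ⊙ H) = 1 + γ_SMB(H)`. -/
theorem gammaSMB_coronaProd {α β : Type*} [Fintype α] [DecidableEq α]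
    [Fintype β] [DecidableEq β] (G : SimpleGraph α) (H : SimpleGraph β)
    (hH : OutcomeS H) (hG : G.Connected) (hn : 2 ≤ Fintype.card α) :
    gammaSMB (coronaProd G H) = 1 + gammaSMB H ∧
    gammaSMB' (coronaProd G H) = 1 + gammaSMB H := by
  classical
  obtain ⟨hDgame, _⟩ := hH
  set m := Nat.find hDgame with hm_def
  have hm : StalWinD H ∅ ∅ m := Nat.find_spec hDgame
  have hmin : ∀ j, j < m → ¬ StalWinD H ∅ ∅ j := fun j hj => Nat.find_min hDgame hj
  have hβ : Nonempty β := by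
    cases hm with
    | done _ _ _ hw => exact ⟨hw.choose⟩
    | step _ _ _ hex _ => exact ⟨hex.choose⟩
  have hα : Nontrivial α := Fintype.one_lt_card_iff_nontrivial.1 hn
  have hαne : Nonempty α := ⟨hα.exists_pair_ne.choose⟩
  obtain ⟨a1⟩ := hαne
  -- upper bound, D-game on the corona
  have hupD : StalWinD (coronaProd G H) ∅ ∅ (m + 1) := by
    refine .step _ _ _ ⟨Sum.inl a1, by simp, by simp⟩ ?_
    intro v hv1 hv2
    obtain ⟨a, hav⟩ : ∃ a : α, a ≠ Sum.elim id Prod.fst v := exists_ne _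
    have h1 : v ≠ Sum.inl a := by rintro rfl; exact hav rfl
    have h2 : ∀ b, v ≠ Sum.inr (a, b) := by rintro b rfl; exact hav rfl
    refine .step _ _ _ (Sum.inl a) (by simp [Ne.symm h1]) (by simp) ?_
    refine (upper_sim G H a m).2 ∅ ∅ _ _ (Finset.mem_insert_self _ _) ?_ ?_ hm
    · intro b; simp
    · intro b hb
      exfalso
      rcases Finset.mem_insert.1 hb with hb | hb
      · exact h2 b hb.symm
      · simp at hb
  -- upper bound, S-game on the corona
  have hupS : StalWinS (coronaProd G H) ∅ ∅ (m + 1) := by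
    refine .step _ _ _ (Sum.inl a1) (by simp) (by simp) ?_
    refine (upper_sim G H a1 m).2 ∅ ∅ ∅ _ (Finset.mem_insert_self _ _) ?_ ?_ hm
    · intro b; simp
    · intro b hb; simp at hb
  -- lower bounds
  have hlowS : ∀ n, StalWinS (coronaProd G H) ∅ ∅ n → m + 1 ≤ n := by
    intro n hwin
    by_contra hc
    push_neg at hc
    have hnm : n ≤ m := Nat.lt_succ_iff.1 hc
    exact LBS G H m hmin n hnm ∅ ∅ (by simp)
      (fun a => Or.inr (Or.inr ⟨by simp, by simp, by simp [pj]⟩)) hwin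
  have hlowD : ∀ n, StalWinD (coronaProd G H) ∅ ∅ n → m + 1 ≤ n := by
    intro n hwin
    by_contra hc
    push_neg at hc
    have hnm : n ≤ m := Nat.lt_succ_iff.1 hc
    exact LBDof G H n (fun D' S' hd ho => LBS G H m hmin n hnm D' S' hd ho)
      ∅ ∅ a1 (by simp)
      (fun a _ => Or.inr (Or.inr ⟨by simp, by simp, by simp [pj]⟩))
      (Or.inr (Or.inr ⟨by simp, by simp⟩)) hwin
  -- value computations
  have hγH : gammaSMB H = (m : ℕ∞) := by
    refine le_antisymm (sInf_le ⟨m, rfl, hm⟩) (le_sInf ?_)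
    rintro k ⟨n, rfl, hwin⟩
    have : m ≤ n := not_lt.1 (fun hlt => hmin n hlt hwin)
    exact_mod_cast this
  have hγC : gammaSMB (coronaProd G H) = ((m + 1 : ℕ) : ℕ∞) := by
    refine le_antisymm (sInf_le ⟨m + 1, rfl, hupD⟩) (le_sInf ?_)
    rintro k ⟨n, rfl, hwin⟩
    exact_mod_cast hlowD n hwin
  have hγC' : gammaSMB' (coronaProd G H) = ((m + 1 : ℕ) : ℕ∞) := by
    refine le_antisymm (sInf_le ⟨m + 1, rfl, hupS⟩) (le_sInf ?_)
    rintro k ⟨n, rfl, hwin⟩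
    exact_mod_cast hlowS n hwin
  rw [hγC, hγC', hγH]
  constructor <;> rw [Nat.cast_add, Nat.cast_one, add_comm]
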